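/- Let $\mathcal{X} \subseteq \mathbb{R}^d$ be a bounded set, let $\Sigma \in \mathbb{R}^{d \times d}$ be a symmetric positive definite matrix, and let $e_1, \dots, e_D \in \mathbb{R}^d$. Define the random feature map $\tilde{\Phi} : \mathcal{X} \to \mathbb{R}^{2D}$ by $\tilde{\Phi}(x) = \left( \tfrac{1}{\sqrt{D}} \cos(e_i^{\top} \Sigma^{1/2} x), \tfrac{1}{\sqrt{D}} \sin(e_i^{\top} \Sigma^{1/2} x) \right)_{i=1}^{D}$. If $\operatorname{span}\{e_1, \dots, e_D\} = \mathbb{R}^d$ and $\|\Sigma^{1/2}\|_F \cdot \operatorname{diam}(\mathcal{X}) \cdot \max_{1 \le i \le D} \|e_i\| < 2\pi$, then $\tilde{\Phi}$ is injective on $\mathcal{X}$. -/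

import Mathlib

open scoped BigOperators

set_option maxHeartbeats 1000000

/-- Injectivity of the Fourier random feature map: if `X ⊆ ℝ^d` is bounded, `A` is a
symmetric positive definite matrix with (symmetric positive definite) square root `S`
(so `S * S = A`), the vectors `e₁, …, e_D` span `ℝ^d`, and
`‖S‖_F · diam(X) · maxᵢ ‖eᵢ‖ < 2π` (with `‖S‖_F` the Frobenius norm), then the map
`Φ(x) = (D^{-1/2} cos(eᵢᵀ S x), D^{-1/2} sin(eᵢᵀ S x))_{i=1}^{D}` is injective on `X`. -/
theorem random_feature_map_injective (d D : ℕ)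
    (X : Set (EuclideanSpace ℝ (Fin d))) (hX : Bornology.IsBounded X)
    (A S : Matrix (Fin d) (Fin d) ℝ)
    (hAsymm : A.IsSymm) (hApd : A.PosDef)
    (hSsymm : S.IsSymm) (hSpd : S.PosDef) (hS : S * S = A)
    (e : Fin D → EuclideanSpace ℝ (Fin d))
    (hspan : Submodule.span ℝ (Set.range e) = ⊤)
    (hbound : Real.sqrt (∑ i : Fin d, ∑ j : Fin d, (S i j) ^ 2) * Metric.diam X *
        (⨆ i : Fin D, ‖e i‖) < 2 * Real.pi)
    (Φ : EuclideanSpace ℝ (Fin d) → Fin D → ℝ × ℝ)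
    (hΦ : ∀ x i, Φ x i =
      ((1 / Real.sqrt D) * Real.cos (∑ j : Fin d, ∑ k : Fin d, e i j * S j k * x k),
       (1 / Real.sqrt D) * Real.sin (∑ j : Fin d, ∑ k : Fin d, e i j * S j k * x k))) :
    Set.InjOn Φ X := by
  intro x hx y hy hxy
  set v : Fin d → ℝ := fun k => x k - y k with hv
  set w : Fin d → ℝ := fun j => ∑ k, S j k * v k with hw
  set F2 : ℝ := ∑ i : Fin d, ∑ j : Fin d, (S i j) ^ 2 with hF2def
  have hF2 : (0:ℝ) ≤ F2 := by positivity
  set V : ℝ := ∑ k, (v k) ^ 2 with hVdef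
  have hV : (0:ℝ) ≤ V := by positivity
  have hVd : Real.sqrt V = dist x y := by
    rw [EuclideanSpace.dist_eq]
    congr 1
    simp [hVdef, hv, Real.dist_eq, sq_abs]
  have key : ∀ i : Fin D, ∑ j, e i j * w j = 0 := by
    intro i
    have hDpos : (0:ℕ) < D := i.pos
    have hsD : (1 / Real.sqrt D : ℝ) ≠ 0 := by
      have : (0:ℝ) < Real.sqrt D := Real.sqrt_pos.2 (by exact_mod_cast hDpos)
      positivity
    set a := ∑ j : Fin d, ∑ k : Fin d, e i j * S j k * x k with ha
    set b := ∑ j : Fin d, ∑ k : Fin d, e i j * S j k * y k with hb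
    have h := congrFun hxy i
    rw [hΦ, hΦ, ← ha, ← hb, Prod.mk.injEq] at h
    have hcos : Real.cos a = Real.cos b := mul_left_cancel₀ hsD h.1
    have hsin : Real.sin a = Real.sin b := mul_left_cancel₀ hsD h.2
    have hone : Real.cos (a - b) = 1 := by
      rw [Real.cos_sub, hcos, hsin]
      nlinarith [Real.sin_sq_add_cos_sq b]
    have hab : a - b = ∑ j, e i j * w j := by
      rw [ha, hb, ← Finset.sum_sub_distrib]
      refine Finset.sum_congr rfl fun j _ => ?_
      rw [← Finset.sum_sub_distrib, hw, Finset.mul_sum]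
      refine Finset.sum_congr rfl fun k _ => ?_
      simp only [hv]
      ring
    set E : ℝ := ∑ j, (e i j) ^ 2 with hEdef
    have hE : (0:ℝ) ≤ E := by positivity
    have hEe : Real.sqrt E = ‖e i‖ := by
      rw [EuclideanSpace.norm_eq]
      congr 1
      simp [hEdef, Real.norm_eq_abs, sq_abs]
    have hCS1 : (a - b) ^ 2 ≤ E * (∑ j, (w j) ^ 2) := by
      rw [hab]; exact Finset.sum_mul_sq_le_sq_mul_sq _ _ _
    have hWb : (∑ j, (w j) ^ 2) ≤ F2 * V := by
      have : ∀ j ∈ Finset.univ, (w j) ^ 2 ≤ (∑ k, (S j k) ^ 2) * V := by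
        intro j _
        rw [hw]
        exact Finset.sum_mul_sq_le_sq_mul_sq _ _ _
      calc (∑ j, (w j) ^ 2) ≤ ∑ j, (∑ k, (S j k) ^ 2) * V := Finset.sum_le_sum this
        _ = F2 * V := by rw [hF2def, Finset.sum_mul]
    have habs : |a - b| ≤ Real.sqrt E * (Real.sqrt F2 * Real.sqrt V) := by
      rw [← Real.sqrt_sq_eq_abs]
      calc Real.sqrt ((a - b) ^ 2) ≤ Real.sqrt (E * (F2 * V)) := by
            apply Real.sqrt_le_sqrt
            exact hCS1.trans (mul_le_mul_of_nonneg_left hWb hE)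
        _ = _ := by rw [Real.sqrt_mul hE, Real.sqrt_mul hF2]
    have hsup : ‖e i‖ ≤ ⨆ i, ‖e i‖ :=
      le_ciSup (f := fun i => ‖e i‖) (Set.Finite.bddAbove (Set.finite_range _)) i
    have hdiam : dist x y ≤ Metric.diam X := Metric.dist_le_diam_of_mem hX hx hy
    have hnorm : (0:ℝ) ≤ ‖e i‖ := norm_nonneg _
    have hdnn : (0:ℝ) ≤ dist x y := dist_nonneg
    have hsF2 : (0:ℝ) ≤ Real.sqrt F2 := Real.sqrt_nonneg _
    have hlt : |a - b| < 2 * Real.pi := by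
      have hcnn : (0:ℝ) ≤ ⨆ i, ‖e i‖ := le_trans hnorm hsup
      have h1 : Real.sqrt E * (Real.sqrt F2 * Real.sqrt V) ≤
          Real.sqrt F2 * Metric.diam X * (⨆ i, ‖e i‖) := by
        rw [hEe, hVd]
        calc ‖e i‖ * (Real.sqrt F2 * dist x y)
            ≤ (⨆ i, ‖e i‖) * (Real.sqrt F2 * Metric.diam X) :=
              mul_le_mul hsup (mul_le_mul_of_nonneg_left hdiam hsF2)
                (by positivity) hcnn
          _ = Real.sqrt F2 * Metric.diam X * (⨆ i, ‖e i‖) := by ring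
      linarith
    have hzero : a - b = 0 := by
      rw [← Real.cos_eq_one_iff_of_lt_of_lt (by cases abs_lt.1 hlt; linarith)
        (by cases abs_lt.1 hlt; linarith)]
      exact hone
    rw [← hab, hzero]
  have hw0 : ∀ j, w j = 0 := by
    let L : EuclideanSpace ℝ (Fin d) →ₗ[ℝ] ℝ :=
      { toFun := fun u => ∑ j, u j * w j
        map_add' := fun u u' => by
          simp [add_mul, Finset.sum_add_distrib]
        map_smul' := fun c u => by
          simp [Finset.mul_sum, mul_assoc] }
    have hker : Submodule.span ℝ (Set.range e) ≤ LinearMap.ker L := by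
      rw [Submodule.span_le]
      rintro _ ⟨i, rfl⟩
      simpa [L] using key i
    rw [hspan] at hker
    have hLw : L (WithLp.toLp 2 w) = 0 := hker Submodule.mem_top
    have hsum : ∑ j, w j * w j = 0 := hLw
    intro j
    have h := (Finset.sum_eq_zero_iff_of_nonneg
      (fun j _ => mul_self_nonneg (w j))).1 hsum j (Finset.mem_univ j)
    exact mul_self_eq_zero.1 h
  have hv0 : v = 0 := by
    by_contra h
    have hpos := hSpd.dotProduct_mulVec_pos h
    have hmv : S.mulVec v = w := by
      funext j
      simp [Matrix.mulVec, dotProduct, hw]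
    rw [hmv] at hpos
    have hz : dotProduct (star v) w = 0 := by
      simp [dotProduct, hw0]
    rw [hz] at hpos
    exact lt_irrefl 0 hpos
  have : ∀ k, x k = y k := by
    intro k
    have := congrFun hv0 k
    simp only [hv, Pi.zero_apply] at this
    linarith
  exact PiLp.ext this
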